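/- Let S be a countable distributive join-semilattice with a least element. Then there exist a countable ℚ-vector space E and a subset E⁺ ⊆ E containing 0, closed under addition and under multiplication by nonnegative rational scalars, with E⁺ ∩ (−E⁺) = {0}, with every element of E a difference of two elements of E⁺, with E⁺ satisfying the refinement property (so that E with positive cone E⁺ is a dimension group), together with a surjective map ν : E⁺ → S such that ν(x + y) = ν(x) ⊔ ν(y) for all x, y ∈ E⁺ and ν(x) ≤ ν(y) if and only if x ∝ y (i.e. n•y − x ∈ E⁺ for some n ≥ 1); that is, the maximal semilattice quotient ∇(E⁺) is isomorphic to S. If, in addition, S has a greatest element, then E⁺ contains an order-unit of E, i.e. an element u such that for every x ∈ E there is n ≥ 1 with n•u − x ∈ E⁺. -/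

import Mathlib

namespace Stmt15Aux

variable {S : Type*} [SemilatticeSup S] [OrderBot S]

section
variable (hdist : ∀ a b₀ b₁ : S, a ≤ b₀ ⊔ b₁ →
      ∃ a₀ a₁ : S, a = a₀ ⊔ a₁ ∧ a₀ ≤ b₀ ∧ a₁ ≤ b₁)
include hdist

lemma distrib_finset (B : Finset ℕ) (ψ : ℕ → S) :
    ∀ a : S, a ≤ B.sup ψ → ∃ γ : ℕ → S, a = B.sup γ ∧ ∀ b ∈ B, γ b ≤ ψ b := by
  classical
  induction B using Finset.induction_on with
  | empty =>
      intro a ha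
      refine ⟨fun _ => ⊥, ?_, by simp⟩
      simpa using le_bot_iff.mp (by simpa using ha)
  | insert b B hb ih =>
      intro a ha
      rw [Finset.sup_insert] at ha
      obtain ⟨a₀, a₁, rfl, h₀, h₁⟩ := hdist a (ψ b) (B.sup ψ) ha
      obtain ⟨γ', hγ'₁, hγ'₂⟩ := ih a₁ h₁
      refine ⟨fun x => if x = b then a₀ else γ' x, ?_, ?_⟩
      · rw [Finset.sup_insert]
        have : B.sup (fun x => if x = b then a₀ else γ' x) = B.sup γ' :=
          Finset.sup_congr rfl fun x hx => if_neg (by rintro rfl; exact hb hx)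
        simp [this, ← hγ'₁]
      · intro x hx
        rcases Finset.mem_insert.mp hx with rfl | hx
        · simpa using h₀
        · have hxb : x ≠ b := fun h => hb (h ▸ hx)
          simpa [hxb] using hγ'₂ x hx

/-- One-step fix of a single pair `(C, D)` with `sup C ≤ sup D`, splitting the atoms of `C`. -/
lemma fixPair_ex (X : Finset ℕ) (φ : ℕ → S) (C D : Finset ℕ)
    (hC : C ⊆ X) (hD : D ⊆ X) (h : C.sup φ ≤ D.sup φ) :
    ∃ (X' : Finset ℕ) (φ' : ℕ → S) (f : ℕ → Finset ℕ),
      (∀ x, f x ⊆ X') ∧ (∀ x ∈ X, φ x = (f x).sup φ') ∧ (∀ x ∉ X, f x = ∅) ∧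
      C.biUnion f ⊆ D.biUnion f := by
  classical
  -- encoding: old atom x ↦ 2*x ; new atom (c,d) ↦ 2*(pair c d)+1
  set enc : ℕ → ℕ → ℕ := fun c d => 2 * Nat.pair c d + 1 with henc
  have hγ : ∀ c ∈ C, ∃ γ : ℕ → S, φ c = D.sup γ ∧ ∀ d ∈ D, γ d ≤ φ d :=
    fun c hc => distrib_finset hdist D φ (φ c) (le_trans (Finset.le_sup hc) h)
  choose γ hγ1 hγ2 using hγ
  set γ' : ℕ → ℕ → S := fun c d => if hc : c ∈ C then γ c hc d else ⊥ with hγ'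
  set φ' : ℕ → S := fun n =>
    if n % 2 = 0 then φ (n / 2)
    else γ' (Nat.unpair ((n - 1) / 2)).1 (Nat.unpair ((n - 1) / 2)).2 with hφ'
  have hold : ∀ x, φ' (2 * x) = φ x := by
    intro x; simp [hφ', Nat.mul_div_cancel_left, Nat.mul_mod_right]
  have hnew : ∀ c d, φ' (enc c d) = γ' c d := by
    intro c d
    have h1 : (2 * Nat.pair c d + 1) % 2 = 1 := by omega
    have h2 : (2 * Nat.pair c d + 1 - 1) / 2 = Nat.pair c d := by omega
    simp [hφ', henc, h1, h2]
  set X' : Finset ℕ := X.image (fun x => 2 * x) ∪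
      (C ×ˢ D).image (fun p => enc p.1 p.2) with hX'
  set f : ℕ → Finset ℕ := fun x =>
    if x ∈ C then
      (D.image (enc x)) ∪ (if x ∈ D then C.image (fun c => enc c x) else ∅)
    else if x ∈ D then insert (2 * x) (C.image (fun c => enc c x))
    else if x ∈ X then {2 * x} else ∅ with hf
  refine ⟨X', φ', f, ?_, ?_, ?_, ?_⟩
  · -- f x ⊆ X'
    intro x y hy
    have memold : ∀ z ∈ X, 2 * z ∈ X' := fun z hz =>
      Finset.mem_union_left _ (Finset.mem_image_of_mem _ hz)
    have memnew : ∀ c ∈ C, ∀ d ∈ D, enc c d ∈ X' := by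
      intro c hc d hd
      have hm : ((c, d) : ℕ × ℕ) ∈ C ×ˢ D := Finset.mem_product.mpr ⟨hc, hd⟩
      exact Finset.mem_union_right _ (Finset.mem_image_of_mem _ hm)
    by_cases hc : x ∈ C
    · simp only [hf, hc, if_pos] at hy
      rcases Finset.mem_union.mp hy with hy | hy
      · obtain ⟨d, hd, rfl⟩ := Finset.mem_image.mp hy
        exact memnew x hc d hd
      · by_cases hdx : x ∈ D
        · simp only [hdx, if_pos] at hy
          obtain ⟨c, hc', rfl⟩ := Finset.mem_image.mp hy
          exact memnew c hc' x hdx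
        · simp [hdx] at hy
    · by_cases hdx : x ∈ D
      · simp only [hf, hc, hdx, if_neg, if_pos] at hy
        rcases Finset.mem_insert.mp hy with rfl | hy
        · exact memold x (hD hdx)
        · obtain ⟨c, hc', rfl⟩ := Finset.mem_image.mp hy
          exact memnew c hc' x hdx
      · by_cases hx : x ∈ X
        · simp only [hf, hc, hdx, hx, if_neg, if_pos] at hy
          simp at hy
          subst hy
          exact memold x hx
        · simp [hf, hc, hdx, hx] at hy
  · -- sup condition
    intro x hx
    have hsub : ∀ hc : x ∈ C, (D.image (enc x)).sup φ' = φ x := by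
      intro hc
      rw [Finset.sup_image]
      have : D.sup (φ' ∘ enc x) = D.sup (γ x hc) :=
        Finset.sup_congr rfl fun d _ => by
          simp only [Function.comp_apply, hnew, hγ']
          rw [dif_pos hc]
      rw [this, ← hγ1]
    have hsmall : ∀ hdx : x ∈ D, (C.image (fun c => enc c x)).sup φ' ≤ φ x := by
      intro hdx
      rw [Finset.sup_image]
      refine Finset.sup_le fun c hc => ?_
      simp only [Function.comp_apply, hnew, hγ']
      rw [dif_pos hc]
      exact hγ2 c hc x hdx
    by_cases hc : x ∈ C
    · by_cases hdx : x ∈ D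
      · simp only [hf]
        rw [if_pos hc, if_pos hdx, Finset.sup_union, hsub hc]
        exact (sup_eq_left.mpr (hsmall hdx)).symm
      · simp only [hf]
        rw [if_pos hc, if_neg hdx, Finset.union_empty, hsub hc]
    · by_cases hdx : x ∈ D
      · simp only [hf]
        rw [if_neg hc, if_pos hdx, Finset.sup_insert, hold]
        exact (sup_eq_left.mpr (hsmall hdx)).symm
      · simp only [hf]
        rw [if_neg hc, if_neg hdx, if_pos hx]
        simp [hold]
  · -- outside
    intro x hx
    have hc : x ∉ C := fun hc => hx (hC hc)
    have hdx : x ∉ D := fun hd => hx (hD hd)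
    simp [hf, hc, hdx, hx]
  · -- inclusion
    intro y hy
    obtain ⟨c, hc, hyc⟩ := Finset.mem_biUnion.mp hy
    have key : ∀ c' ∈ C, ∀ d ∈ D, enc c' d ∈ D.biUnion f := by
      intro c' hc' d hd
      refine Finset.mem_biUnion.mpr ⟨d, hd, ?_⟩
      by_cases hcd : d ∈ C
      · simp only [hf, hcd, if_pos]
        refine Finset.mem_union_right _ ?_
        rw [if_pos hd]
        exact Finset.mem_image_of_mem _ hc'
      · simp only [hf, hcd, hd, if_neg, if_pos]
        exact Finset.mem_insert_of_mem (Finset.mem_image_of_mem _ hc')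
    simp only [hf, hc, if_pos] at hyc
    rcases Finset.mem_union.mp hyc with hy' | hy'
    · obtain ⟨d, hd, rfl⟩ := Finset.mem_image.mp hy'
      exact key c hc d hd
    · by_cases hdx : c ∈ D
      · simp only [hdx, if_pos] at hy'
        obtain ⟨c', hc', rfl⟩ := Finset.mem_image.mp hy'
        exact key c' hc' c hdx
      · simp [hdx] at hy'

omit hdist in
/-- Trivial (identity) step. -/
lemma fixNil_ex (X : Finset ℕ) (φ : ℕ → S) :
    ∃ (X' : Finset ℕ) (φ' : ℕ → S) (f : ℕ → Finset ℕ),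
      (∀ x, f x ⊆ X') ∧ (∀ x ∈ X, φ x = (f x).sup φ') ∧ (∀ x ∉ X, f x = ∅) ∧
      ∀ A : Finset ℕ, A ⊆ X → A.biUnion f = A := by
  classical
  refine ⟨X, φ, fun x => if x ∈ X then {x} else ∅, ?_, ?_, ?_, ?_⟩
  · intro x y hy
    dsimp only at hy
    by_cases hx : x ∈ X
    · rw [if_pos hx] at hy; rwa [Finset.mem_singleton.mp hy]
    · rw [if_neg hx] at hy; exact absurd hy (Finset.notMem_empty y)
  · intro x hx; dsimp only; rw [if_pos hx, Finset.sup_singleton]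
  · intro x hx; dsimp only; rw [if_neg hx]
  · intro A hA
    ext y
    simp only [Finset.mem_biUnion]
    constructor
    · rintro ⟨x, hx, hy⟩
      rw [if_pos (hA hx)] at hy
      rwa [Finset.mem_singleton.mp hy]
    · intro hy
      exact ⟨y, hy, by rw [if_pos (hA hy)]; exact Finset.mem_singleton_self y⟩

/-- Fix a whole list of pairs at once. -/
lemma fixMany_ex (n : ℕ) : ∀ (L : List (Finset ℕ × Finset ℕ)), L.length ≤ n →
    ∀ (X : Finset ℕ) (φ : ℕ → S),
    (∀ p ∈ L, p.1 ⊆ X ∧ p.2 ⊆ X ∧ p.1.sup φ ≤ p.2.sup φ) →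
    ∃ (X' : Finset ℕ) (φ' : ℕ → S) (f : ℕ → Finset ℕ),
      (∀ x, f x ⊆ X') ∧ (∀ x ∈ X, φ x = (f x).sup φ') ∧ (∀ x ∉ X, f x = ∅) ∧
      ∀ p ∈ L, p.1.biUnion f ⊆ p.2.biUnion f := by
  classical
  induction n with
  | zero =>
      intro L hlen X φ _
      have : L = [] := List.length_eq_zero_iff.mp (Nat.le_zero.mp hlen)
      subst this
      obtain ⟨X', φ', f, h1, h2, h3, _⟩ := fixNil_ex (S := S) X φ
      exact ⟨X', φ', f, h1, h2, h3, by simp⟩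
  | succ n ihn =>
      intro L hlen X φ hL
      cases L with
      | nil =>
          obtain ⟨X', φ', f, h1, h2, h3, _⟩ := fixNil_ex (S := S) X φ
          exact ⟨X', φ', f, h1, h2, h3, by simp⟩
      | cons p L =>
          obtain ⟨hp1, hp2, hp3⟩ := hL p List.mem_cons_self
          obtain ⟨X₁, φ₁, f₁, h1sub, h1sup, h1out, h1pair⟩ :=
            fixPair_ex hdist X φ p.1 p.2 hp1 hp2 hp3
          have hbi : ∀ A : Finset ℕ, A ⊆ X → (A.biUnion f₁).sup φ₁ = A.sup φ := by
            intro A hA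
            rw [Finset.sup_biUnion]
            exact Finset.sup_congr rfl fun x hx => (h1sup x (hA hx)).symm
          have hlen' : (L.map fun q => (q.1.biUnion f₁, q.2.biUnion f₁)).length ≤ n := by
            rw [List.length_map]
            exact Nat.le_of_succ_le_succ (by simpa using hlen)
          obtain ⟨X₂, φ₂, f₂, h2sub, h2sup, h2out, h2pair⟩ :=
            ihn (L.map fun q => (q.1.biUnion f₁, q.2.biUnion f₁)) hlen' X₁ φ₁ (by
              intro q hq
              simp only [List.mem_map] at hq
              obtain ⟨q₀, hq₀, rfl⟩ := hq
              obtain ⟨hq1, hq2, hq3⟩ := hL q₀ (List.mem_cons_of_mem p hq₀)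
              refine ⟨Finset.biUnion_subset.mpr fun x _ => h1sub x,
                Finset.biUnion_subset.mpr fun x _ => h1sub x, ?_⟩
              rw [hbi _ hq1, hbi _ hq2]; exact hq3)
          refine ⟨X₂, φ₂, fun x => (f₁ x).biUnion f₂, ?_, ?_, ?_, ?_⟩
          · intro x
            exact Finset.biUnion_subset.mpr fun z _ => h2sub z
          · intro x hx
            rw [Finset.sup_biUnion, h1sup x hx]
            exact Finset.sup_congr rfl fun z hz => h2sup z (h1sub x hz)
          · intro x hx
            dsimp only
            rw [h1out x hx, Finset.biUnion_empty]
          · intro q hq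
            rw [← Finset.biUnion_biUnion, ← Finset.biUnion_biUnion]
            rcases List.mem_cons.mp hq with rfl | hq
            · exact Finset.biUnion_subset_biUnion_of_subset_left _ h1pair
            · exact h2pair _ (List.mem_map.mpr ⟨q, hq, rfl⟩)

/-- The full one-stage step: fix all pairs, then adjoin a fresh atom with value `s`. -/
lemma step_ex (X : Finset ℕ) (φ : ℕ → S) (s : S) :
    ∃ r : Finset ℕ × (ℕ → S) × (ℕ → Finset ℕ),
      (∀ x, r.2.2 x ⊆ r.1) ∧ (∀ x ∈ X, φ x = (r.2.2 x).sup r.2.1) ∧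
      (∀ x ∉ X, r.2.2 x = ∅) ∧
      (∀ A B : Finset ℕ, A ⊆ X → B ⊆ X → A.sup φ ≤ B.sup φ →
        A.biUnion r.2.2 ⊆ B.biUnion r.2.2) ∧
      (∃ x₀ ∈ r.1, r.2.1 x₀ = s) := by
  classical
  set L := ((X.powerset ×ˢ X.powerset).filter fun p => p.1.sup φ ≤ p.2.sup φ).toList with hLdef
  have hL : ∀ p ∈ L, p.1 ⊆ X ∧ p.2 ⊆ X ∧ p.1.sup φ ≤ p.2.sup φ := by
    intro p hp
    rw [hLdef, Finset.mem_toList, Finset.mem_filter, Finset.mem_product] at hp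
    exact ⟨Finset.mem_powerset.mp hp.1.1, Finset.mem_powerset.mp hp.1.2, hp.2⟩
  obtain ⟨X', φ', f, hsub, hsup, hout, hpair⟩ := fixMany_ex hdist L.length L le_rfl X φ hL
  obtain ⟨a, ha⟩ := Infinite.exists_notMem_finset X'
  refine ⟨(insert a X', Function.update φ' a s, f), ?_, ?_, hout, ?_, ?_⟩
  · exact fun x => (hsub x).trans (Finset.subset_insert a X')
  · intro x hx
    rw [hsup x hx]
    refine Finset.sup_congr rfl fun y hy => ?_
    have hne : y ≠ a := fun h => ha (by rw [← h]; exact hsub x hy)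
    exact (Function.update_of_ne hne s φ').symm
  · intro A B hA hB hAB
    exact hpair (A, B) (by
      rw [hLdef, Finset.mem_toList, Finset.mem_filter, Finset.mem_product]
      exact ⟨⟨Finset.mem_powerset.mpr hA, Finset.mem_powerset.mpr hB⟩, hAB⟩)
  · exact ⟨a, Finset.mem_insert_self a X', Function.update_self a s φ'⟩

noncomputable def nextStage (X : Finset ℕ) (φ : ℕ → S) (s : S) :
    Finset ℕ × (ℕ → S) × (ℕ → Finset ℕ) :=
  Classical.choose (step_ex hdist X φ s)

lemma nextStage_spec (X : Finset ℕ) (φ : ℕ → S) (s : S) :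
    (∀ x, (nextStage hdist X φ s).2.2 x ⊆ (nextStage hdist X φ s).1) ∧
    (∀ x ∈ X, φ x = ((nextStage hdist X φ s).2.2 x).sup (nextStage hdist X φ s).2.1) ∧
    (∀ x ∉ X, (nextStage hdist X φ s).2.2 x = ∅) ∧
    (∀ A B : Finset ℕ, A ⊆ X → B ⊆ X → A.sup φ ≤ B.sup φ →
      A.biUnion (nextStage hdist X φ s).2.2 ⊆ B.biUnion (nextStage hdist X φ s).2.2) ∧
    (∃ x₀ ∈ (nextStage hdist X φ s).1, (nextStage hdist X φ s).2.1 x₀ = s) :=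
  Classical.choose_spec (step_ex hdist X φ s)

noncomputable def towerAux (e : ℕ → S) : ℕ → Finset ℕ × (ℕ → S)
  | 0 => (∅, fun _ => ⊥)
  | n + 1 =>
      ((nextStage hdist (towerAux e n).1 (towerAux e n).2 (e n)).1,
       (nextStage hdist (towerAux e n).1 (towerAux e n).2 (e n)).2.1)

/-- The full tower: an ω-chain of finite "Boolean" stages with join-valuations into `S`,
with transition maps that fix all inequalities and realize all values of `e`. -/
lemma tower_ex (e : ℕ → S) :
    ∃ (X : ℕ → Finset ℕ) (Φ : ℕ → ℕ → S) (f : ℕ → ℕ → Finset ℕ),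
      (∀ n x, f n x ⊆ X (n + 1)) ∧
      (∀ n, ∀ x ∈ X n, Φ n x = (f n x).sup (Φ (n + 1))) ∧
      (∀ n A B, A ⊆ X n → B ⊆ X n → A.sup (Φ n) ≤ B.sup (Φ n) →
        A.biUnion (f n) ⊆ B.biUnion (f n)) ∧
      (∀ n, ∃ x₀ ∈ X (n + 1), Φ (n + 1) x₀ = e n) := by
  refine ⟨fun n => (towerAux hdist e n).1, fun n => (towerAux hdist e n).2,
    fun n => (nextStage hdist (towerAux hdist e n).1 (towerAux hdist e n).2 (e n)).2.2,
    ?_, ?_, ?_, ?_⟩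
  · intro n x
    have h := (nextStage_spec hdist (towerAux hdist e n).1 (towerAux hdist e n).2 (e n)).1 x
    simpa [towerAux] using h
  · intro n x hx
    exact (nextStage_spec hdist (towerAux hdist e n).1 (towerAux hdist e n).2 (e n)).2.1 x hx
  · intro n A B hA hB hAB
    exact (nextStage_spec hdist (towerAux hdist e n).1 (towerAux hdist e n).2 (e n)).2.2.2.1
      A B hA hB hAB
  · intro n
    have h := (nextStage_spec hdist (towerAux hdist e n).1 (towerAux hdist e n).2 (e n)).2.2.2.2
    simpa [towerAux] using h

end

section LinAlg

/-- The stage module: finitely supported rational vectors on the atoms. -/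
abbrev V : Type := ℕ →₀ ℚ

/-- Indicator vector of a finite set of atoms. -/
noncomputable def chi (A : Finset ℕ) : V := ∑ y ∈ A, Finsupp.single y 1

lemma chi_apply (A : Finset ℕ) (y : ℕ) : chi A y = if y ∈ A then 1 else 0 := by
  classical
  rw [chi, Finset.sum_apply']
  simp [Finsupp.single_apply, Finset.sum_ite_eq']

variable (f : ℕ → ℕ → Finset ℕ)

/-- One-step transition map between stages. -/
noncomputable def Tmap (n : ℕ) : V →ₗ[ℚ] V :=
  Finsupp.lsum ℚ fun x => LinearMap.toSpanSingleton ℚ V (chi (f n x))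

lemma Tmap_apply (n : ℕ) (v : V) (y : ℕ) :
    Tmap f n v y = ∑ x ∈ v.support, v x * (if y ∈ f n x then 1 else 0) := by
  classical
  rw [Tmap, Finsupp.lsum_apply, Finsupp.sum_apply, Finsupp.sum]
  refine Finset.sum_congr rfl fun x hx => ?_
  rw [LinearMap.toSpanSingleton_apply, Finsupp.smul_apply, chi_apply, smul_eq_mul]

/-- Composite transition maps. -/
noncomputable def chainAux (i : ℕ) : ℕ → V →ₗ[ℚ] V
  | 0 => LinearMap.id
  | j + 1 => if i ≤ j then (Tmap f j).comp (chainAux i j) else LinearMap.id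

lemma chainAux_self (i : ℕ) : chainAux f i i = LinearMap.id := by
  cases i with
  | zero => rfl
  | succ j => simp [chainAux, Nat.not_succ_le_self j]

lemma chainAux_succ (i j : ℕ) (h : i ≤ j) :
    chainAux f i (j + 1) = (Tmap f j).comp (chainAux f i j) := by
  simp [chainAux, h]

lemma chainAux_comp (i j k : ℕ) (hij : i ≤ j) (hjk : j ≤ k) (v : V) :
    chainAux f j k (chainAux f i j v) = chainAux f i k v := by
  induction k, hjk using Nat.le_induction with
  | base => rw [chainAux_self]; rfl
  | succ k hk ih =>
      rw [chainAux_succ f j k hk, chainAux_succ f i k (hij.trans hk)]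
      simp only [LinearMap.comp_apply, ih]

instance chainDirected :
    DirectedSystem (fun _ : ℕ => V) (fun i j _ v => chainAux f i j v) where
  map_self := by intro i x; rw [chainAux_self]; rfl
  map_map := by intro k j i hij hjk x; exact chainAux_comp f i j k hij hjk x

/-- The direct limit vector space. -/
noncomputable def Elim : Type :=
  Module.DirectLimit (fun _ : ℕ => V) (fun i j (_ : i ≤ j) => chainAux f i j)

noncomputable instance : AddCommGroup (Elim f) :=
  inferInstanceAs (AddCommGroup (Module.DirectLimit _ _))

noncomputable instance : Module ℚ (Elim f) :=
  inferInstanceAs (Module ℚ (Module.DirectLimit _ _))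

/-- The canonical maps into the limit. -/
noncomputable def toLim (n : ℕ) : V →ₗ[ℚ] Elim f :=
  Module.DirectLimit.of ℚ ℕ (fun _ => V) (fun i j (_ : i ≤ j) => chainAux f i j) n

lemma toLim_chain {i j : ℕ} (h : i ≤ j) (v : V) :
    toLim f j (chainAux f i j v) = toLim f i v :=
  Module.DirectLimit.of_f (hij := h)

lemma toLim_exists (z : Elim f) : ∃ n v, toLim f n v = z :=
  Module.DirectLimit.exists_of z

lemma toLim_zero {i : ℕ} {v : V} (h : toLim f i v = 0) :
    ∃ j, ∃ hij : i ≤ j, chainAux f i j v = 0 :=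
  Module.DirectLimit.of.zero_exact h

instance : Countable (Elim f) := by
  have hs : Function.Surjective (fun p : (Σ _ : ℕ, V) => toLim f p.1 p.2) := by
    intro z
    obtain ⟨n, v, hv⟩ := toLim_exists f z
    exact ⟨⟨n, v⟩, hv⟩
  exact hs.countable

end LinAlg

section Cone

variable {S : Type*} [SemilatticeSup S] [OrderBot S]
variable (X : ℕ → Finset ℕ) (Φ : ℕ → ℕ → S) (f : ℕ → ℕ → Finset ℕ)

/-- The positive cone at stage `n`: nonnegative vectors supported on the stage atoms. -/
def PosAt (n : ℕ) : Set V := {v | (∀ y, 0 ≤ v y) ∧ ∀ y ∈ v.support, y ∈ X n}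

/-- The valuation of a stage vector. -/
def nuV (n : ℕ) (v : V) : S := v.support.sup (Φ n)

lemma zero_posAt (n : ℕ) : (0 : V) ∈ PosAt X n := ⟨fun y => le_refl 0, by simp⟩

lemma add_posAt {n : ℕ} {v w : V} (hv : v ∈ PosAt X n) (hw : w ∈ PosAt X n) :
    v + w ∈ PosAt X n := by
  refine ⟨fun y => by simpa using add_nonneg (hv.1 y) (hw.1 y), fun y hy => ?_⟩
  rcases Finset.mem_union.mp (Finsupp.support_add hy) with h | h
  · exact hv.2 y h
  · exact hw.2 y h

lemma smul_posAt {n : ℕ} {q : ℚ} (hq : 0 ≤ q) {v : V} (hv : v ∈ PosAt X n) :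
    q • v ∈ PosAt X n := by
  refine ⟨fun y => by simpa using mul_nonneg hq (hv.1 y), fun y hy => ?_⟩
  exact hv.2 y (Finsupp.support_smul hy)

lemma support_add_eq_of_nonneg {v w : V} (hv : ∀ y, 0 ≤ v y) (hw : ∀ y, 0 ≤ w y) :
    (v + w).support = v.support ∪ w.support := by
  ext y
  simp only [Finsupp.mem_support_iff, Finset.mem_union, Finsupp.add_apply]
  constructor
  · intro h
    by_contra hc
    push_neg at hc
    rw [hc.1, hc.2, add_zero] at h
    exact h rfl
  · intro h hz
    have h1 := hv y
    have h2 := hw y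
    rcases h with h | h
    · exact h (by linarith)
    · exact h (by linarith)

lemma nuV_add {n : ℕ} {v w : V} (hv : v ∈ PosAt X n) (hw : w ∈ PosAt X n) :
    nuV Φ n (v + w) = nuV Φ n v ⊔ nuV Φ n w := by
  rw [nuV, nuV, nuV, support_add_eq_of_nonneg hv.1 hw.1, Finset.sup_union]

lemma eq_zero_of_add_eq_zero {v w : V} (hv : ∀ y, 0 ≤ v y) (hw : ∀ y, 0 ≤ w y)
    (h : v + w = 0) : v = 0 := by
  ext y
  have := congrFun (congrArg (fun u : V => (u : ℕ → ℚ)) h) y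
  simp only [Finsupp.coe_add, Pi.add_apply, Finsupp.coe_zero, Pi.zero_apply] at this
  have h1 := hv y
  have h2 := hw y
  simpa using by linarith

variable {X Φ f}

section WithTower

variable (hsub : ∀ n x, f n x ⊆ X (n + 1))
variable (hsup : ∀ n, ∀ x ∈ X n, Φ n x = (f n x).sup (Φ (n + 1)))

lemma Tmap_nonneg {n : ℕ} {v : V} (hv : ∀ y, 0 ≤ v y) (y : ℕ) : 0 ≤ Tmap f n v y := by
  rw [Tmap_apply]
  refine Finset.sum_nonneg fun x _ => mul_nonneg (hv x) (by positivity)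

lemma Tmap_support_subset (n : ℕ) (v : V) :
    (Tmap f n v).support ⊆ v.support.biUnion (f n) := by
  intro y hy
  rw [Finsupp.mem_support_iff, Tmap_apply] at hy
  by_contra hc
  refine hy (Finset.sum_eq_zero fun x hx => ?_)
  have : y ∉ f n x := fun hyx => hc (Finset.mem_biUnion.mpr ⟨x, hx, hyx⟩)
  rw [if_neg this, mul_zero]

lemma Tmap_support_eq {n : ℕ} {v : V} (hv : ∀ y, 0 ≤ v y) :
    (Tmap f n v).support = v.support.biUnion (f n) := by
  refine Finset.Subset.antisymm (Tmap_support_subset n v) fun y hy => ?_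
  obtain ⟨x₀, hx₀, hyx₀⟩ := Finset.mem_biUnion.mp hy
  rw [Finsupp.mem_support_iff, Tmap_apply]
  have hpos : 0 < v x₀ * (if y ∈ f n x₀ then 1 else 0) := by
    rw [if_pos hyx₀, mul_one]
    exact lt_of_le_of_ne (hv x₀) (Ne.symm (Finsupp.mem_support_iff.mp hx₀))
  have hle : v x₀ * (if y ∈ f n x₀ then 1 else 0) ≤
      ∑ x ∈ v.support, v x * (if y ∈ f n x then 1 else 0) :=
    Finset.single_le_sum (fun x _ => mul_nonneg (hv x) (by positivity)) hx₀
  exact ne_of_gt (lt_of_lt_of_le hpos hle)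

include hsub in
lemma Tmap_posAt {n : ℕ} {v : V} (hv : v ∈ PosAt X n) : Tmap f n v ∈ PosAt X (n + 1) := by
  refine ⟨Tmap_nonneg hv.1, fun y hy => ?_⟩
  obtain ⟨x, _, hyx⟩ := Finset.mem_biUnion.mp (Tmap_support_subset n v hy)
  exact hsub n x hyx

include hsup in
lemma Tmap_nuV {n : ℕ} {v : V} (hv : v ∈ PosAt X n) :
    nuV Φ (n + 1) (Tmap f n v) = nuV Φ n v := by
  rw [nuV, nuV, Tmap_support_eq hv.1, Finset.sup_biUnion]
  exact Finset.sup_congr rfl fun x hx => (hsup n x (hv.2 x hx)).symm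

include hsub in
lemma chain_posAt {i j : ℕ} (hij : i ≤ j) {v : V} (hv : v ∈ PosAt X i) :
    chainAux f i j v ∈ PosAt X j := by
  induction j, hij using Nat.le_induction with
  | base => rw [chainAux_self]; exact hv
  | succ j hj ih =>
      rw [chainAux_succ f i j hj]
      exact Tmap_posAt hsub ih

include hsub hsup in
lemma chain_nuV {i j : ℕ} (hij : i ≤ j) {v : V} (hv : v ∈ PosAt X i) :
    nuV Φ j (chainAux f i j v) = nuV Φ i v := by
  induction j, hij using Nat.le_induction with
  | base => rw [chainAux_self]; rfl
  | succ j hj ih =>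
      rw [chainAux_succ f i j hj]
      have := Tmap_nuV (f := f) hsup (chain_posAt hsub hj hv)
      simp only [LinearMap.comp_apply]
      rw [this, ih]

end WithTower

end Cone

section Vextra

/-- Riesz refinement for nonnegative finitely supported rational vectors. -/
lemma refine_V (a₀ a₁ b₀ b₁ : V) (ha₀ : ∀ y, 0 ≤ a₀ y) (ha₁ : ∀ y, 0 ≤ a₁ y)
    (hb₀ : ∀ y, 0 ≤ b₀ y) (hb₁ : ∀ y, 0 ≤ b₁ y) (heq : a₀ + a₁ = b₀ + b₁) :
    ∃ c₀₀ c₀₁ c₁₀ c₁₁ : V,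
      (∀ y, 0 ≤ c₀₀ y) ∧ (∀ y, 0 ≤ c₀₁ y) ∧ (∀ y, 0 ≤ c₁₀ y) ∧ (∀ y, 0 ≤ c₁₁ y) ∧
      (∀ y, a₀ y = 0 → a₁ y = 0 → b₀ y = 0 → b₁ y = 0 →
        c₀₀ y = 0 ∧ c₀₁ y = 0 ∧ c₁₀ y = 0 ∧ c₁₁ y = 0) ∧
      a₀ = c₀₀ + c₀₁ ∧ a₁ = c₁₀ + c₁₁ ∧ b₀ = c₀₀ + c₁₀ ∧ b₁ = c₀₁ + c₁₁ := by
  classical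
  have hpt : ∀ y, a₀ y + a₁ y = b₀ y + b₁ y := by
    intro y
    have := congrFun (congrArg (fun u : V => (u : ℕ → ℚ)) heq) y
    simpa using this
  set c₀₀ : V := Finsupp.zipWith min (min_self 0) a₀ b₀ with hc₀₀
  have hc₀₀app : ∀ y, c₀₀ y = min (a₀ y) (b₀ y) := fun y => Finsupp.zipWith_apply
  set c₀₁ : V := a₀ - c₀₀ with hc₀₁
  set c₁₀ : V := b₀ - c₀₀ with hc₁₀
  set c₁₁ : V := a₁ - c₁₀ with hc₁₁
  have happ₀₁ : ∀ y, c₀₁ y = a₀ y - min (a₀ y) (b₀ y) := fun y => by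
    rw [hc₀₁, Finsupp.sub_apply, hc₀₀app]
  have happ₁₀ : ∀ y, c₁₀ y = b₀ y - min (a₀ y) (b₀ y) := fun y => by
    rw [hc₁₀, Finsupp.sub_apply, hc₀₀app]
  have happ₁₁ : ∀ y, c₁₁ y = a₁ y - (b₀ y - min (a₀ y) (b₀ y)) := fun y => by
    rw [hc₁₁, Finsupp.sub_apply, happ₁₀]
  refine ⟨c₀₀, c₀₁, c₁₀, c₁₁, ?_, ?_, ?_, ?_, ?_, by rw [hc₀₁]; abel, by rw [hc₁₁, hc₁₀]; abel, by rw [hc₁₀]; abel, ?_⟩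
  · intro y; rw [hc₀₀app]; exact le_min (ha₀ y) (hb₀ y)
  · intro y; rw [happ₀₁]; have := min_le_left (a₀ y) (b₀ y); linarith
  · intro y; rw [happ₁₀]; have := min_le_right (a₀ y) (b₀ y); linarith
  · intro y
    rw [happ₁₁]
    rcases le_total (a₀ y) (b₀ y) with h | h
    · rw [min_eq_left h]
      have := hpt y
      have := hb₁ y
      linarith
    · rw [min_eq_right h]
      have := ha₁ y
      linarith
  · intro y h0 h1 h2 h3
    refine ⟨?_, ?_, ?_, ?_⟩
    · rw [hc₀₀app, h0, h2]; simp
    · rw [happ₀₁, h0, h2]; simp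
    · rw [happ₁₀, h0, h2]; simp
    · rw [happ₁₁, h0, h1, h2]; simp
  · -- b₁ = c₀₁ + c₁₁
    have : a₀ + a₁ - b₀ = b₁ := by rw [heq]; abel
    rw [← this, hc₀₁, hc₁₁, hc₁₀]
    abel

/-- Find a natural multiple dominating `v` by `w`, given support inclusion. -/
lemma exists_nat_dom {v w : V} (hv : ∀ y, 0 ≤ v y) (hw : ∀ y, 0 ≤ w y)
    (hsupp : v.support ⊆ w.support) : ∃ n : ℕ, 1 ≤ n ∧ ∀ y, v y ≤ (n : ℚ) * w y := by
  classical
  refine ⟨1 + v.support.sup fun y => ⌈v y / w y⌉₊, by omega, fun y => ?_⟩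
  by_cases hy : y ∈ v.support
  · have hwy : 0 < w y :=
      lt_of_le_of_ne (hw y) (Ne.symm (Finsupp.mem_support_iff.mp (hsupp hy)))
    have h1 : v y / w y ≤ (⌈v y / w y⌉₊ : ℚ) := Nat.le_ceil _
    have h2 : (⌈v y / w y⌉₊ : ℚ) ≤ ((1 + v.support.sup fun y => ⌈v y / w y⌉₊ : ℕ) : ℚ) := by
      have h : ⌈v y / w y⌉₊ ≤ v.support.sup fun y => ⌈v y / w y⌉₊ :=
        Finset.le_sup (f := fun y => ⌈v y / w y⌉₊) hy
      have h' : ⌈v y / w y⌉₊ ≤ 1 + v.support.sup fun y => ⌈v y / w y⌉₊ := by omega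
      exact_mod_cast h'
    have h3 : v y / w y ≤ ((1 + v.support.sup fun y => ⌈v y / w y⌉₊ : ℕ) : ℚ) :=
      h1.trans h2
    calc v y = (v y / w y) * w y := by field_simp
      _ ≤ _ := mul_le_mul_of_nonneg_right h3 (hw y)
  · rw [Finsupp.notMem_support_iff.mp hy]
    exact mul_nonneg (by positivity) (hw y)

end Vextra

section Limit

variable {S : Type*} [SemilatticeSup S] [OrderBot S]
variable (X : ℕ → Finset ℕ) (Φ : ℕ → ℕ → S) (f : ℕ → ℕ → Finset ℕ)

/-- The positive cone of the limit. -/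
def posSet : Set (Elim f) := {z | ∃ n v, v ∈ PosAt X n ∧ toLim f n v = z}

open Classical in
/-- The valuation on the limit. -/
noncomputable def nuE (z : Elim f) : S :=
  if h : z ∈ posSet X f then nuV Φ h.choose h.choose_spec.choose else ⊥

variable {X Φ f}
variable (hsub : ∀ n x, f n x ⊆ X (n + 1))
variable (hsup : ∀ n, ∀ x ∈ X n, Φ n x = (f n x).sup (Φ (n + 1)))

lemma chainAux_one (n : ℕ) (v : V) : chainAux f n (n + 1) v = Tmap f n v := by
  rw [chainAux_succ f n n le_rfl, LinearMap.comp_apply, chainAux_self]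
  rfl

lemma exact_eq {k : ℕ} {v w : V} (h : toLim f k v = toLim f k w) :
    ∃ k', ∃ _ : k ≤ k', chainAux f k k' v = chainAux f k k' w := by
  have h0 : toLim f k (v - w) = 0 := by rw [map_sub, h, sub_self]
  obtain ⟨k', hkk', hz⟩ := toLim_zero f h0
  rw [map_sub, sub_eq_zero] at hz
  exact ⟨k', hkk', hz⟩

include hsub hsup in
lemma nuV_welldef {n m : ℕ} {v w : V} (hv : v ∈ PosAt X n) (hw : w ∈ PosAt X m)
    (h : toLim f n v = toLim f m w) : nuV Φ n v = nuV Φ m w := by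
  have hnk : n ≤ max n m := le_max_left n m
  have hmk : m ≤ max n m := le_max_right n m
  have h1 : toLim f (max n m) (chainAux f n (max n m) v) =
      toLim f (max n m) (chainAux f m (max n m) w) := by
    rw [toLim_chain f hnk, toLim_chain f hmk, h]
  obtain ⟨k', hkk', hz⟩ := exact_eq h1
  have h3 : chainAux f n k' v = chainAux f m k' w := by
    rw [← chainAux_comp f n (max n m) k' hnk hkk' v,
        ← chainAux_comp f m (max n m) k' hmk hkk' w, hz]
  calc nuV Φ n v = nuV Φ k' (chainAux f n k' v) :=
        (chain_nuV hsub hsup (hnk.trans hkk') hv).symm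
    _ = nuV Φ k' (chainAux f m k' w) := by rw [h3]
    _ = nuV Φ m w := chain_nuV hsub hsup (hmk.trans hkk') hw

include hsub hsup in
lemma nuE_toLim {n : ℕ} {v : V} (hv : v ∈ PosAt X n) :
    nuE X Φ f (toLim f n v) = nuV Φ n v := by
  have hmem : toLim f n v ∈ posSet X f := ⟨n, v, hv, rfl⟩
  rw [nuE]
  rw [dif_pos hmem]
  exact nuV_welldef hsub hsup hmem.choose_spec.choose_spec.1 hv
    hmem.choose_spec.choose_spec.2

include hsub in
lemma common_rep {z₁ z₂ : Elim f} (h₁ : z₁ ∈ posSet X f) (h₂ : z₂ ∈ posSet X f) :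
    ∃ k v w, v ∈ PosAt X k ∧ w ∈ PosAt X k ∧ toLim f k v = z₁ ∧ toLim f k w = z₂ := by
  obtain ⟨n, v, hv, hv'⟩ := h₁
  obtain ⟨m, w, hw, hw'⟩ := h₂
  have hnk : n ≤ max n m := le_max_left n m
  have hmk : m ≤ max n m := le_max_right n m
  exact ⟨max n m, chainAux f n (max n m) v, chainAux f m (max n m) w,
    chain_posAt hsub hnk hv, chain_posAt hsub hmk hw,
    by rw [toLim_chain f hnk, hv'], by rw [toLim_chain f hmk, hw']⟩

include hsub in
lemma rep_controlled (z : Elim f) :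
    ∃ n v, toLim f n v = z ∧ ∀ y ∈ (v : V).support, y ∈ X n := by
  obtain ⟨n, v, hv⟩ := toLim_exists f z
  refine ⟨n + 1, Tmap f n v, ?_, fun y hy => ?_⟩
  · rw [← chainAux_one n v, toLim_chain f (Nat.le_succ n), hv]
  · obtain ⟨x, _, hyx⟩ := Finset.mem_biUnion.mp (Tmap_support_subset n v hy)
    exact hsub n x hyx

include hsub in
lemma posSet_add {z₁ z₂ : Elim f} (h₁ : z₁ ∈ posSet X f) (h₂ : z₂ ∈ posSet X f) :
    z₁ + z₂ ∈ posSet X f := by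
  obtain ⟨k, v, w, hv, hw, hv', hw'⟩ := common_rep hsub h₁ h₂
  exact ⟨k, v + w, add_posAt X hv hw, by rw [map_add, hv', hw']⟩

include hsub in
lemma posSet_generating (x : Elim f) :
    ∃ p ∈ posSet X f, ∃ q ∈ posSet X f, x = p - q := by
  classical
  obtain ⟨n, w, hwx, hsupp⟩ := rep_controlled hsub x
  set wp : V := w.filter (fun y => 0 < w y) with hwp
  set wn : V := (-w).filter (fun y => 0 < (-w) y) with hwn
  have hwp_app : ∀ y, wp y = if 0 < w y then w y else 0 := fun y => by
    rw [hwp, Finsupp.filter_apply]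
  have hwn_app : ∀ y, wn y = if 0 < -(w y) then -(w y) else 0 := fun y => by
    rw [hwn, Finsupp.filter_apply]
    simp [Finsupp.neg_apply]
  have hw_eq : w = wp - wn := by
    ext y
    rw [Finsupp.sub_apply, hwp_app, hwn_app]
    rcases lt_trichotomy (w y) 0 with h | h | h
    · rw [if_neg (by linarith), if_pos (by linarith)]; ring
    · rw [if_neg (by linarith), if_neg (by linarith)]; simp [h]
    · rw [if_pos h, if_neg (by linarith)]; ring
  have hwp_mem : wp ∈ PosAt X n := by
    refine ⟨fun y => by rw [hwp_app]; split <;> linarith, fun y hy => ?_⟩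
    have : y ∈ w.support := by
      rw [Finsupp.mem_support_iff] at hy ⊢
      intro h0
      rw [hwp_app, h0] at hy
      simp at hy
    exact hsupp y this
  have hwn_mem : wn ∈ PosAt X n := by
    refine ⟨fun y => by rw [hwn_app]; split <;> linarith, fun y hy => ?_⟩
    have : y ∈ w.support := by
      rw [Finsupp.mem_support_iff] at hy ⊢
      intro h0
      rw [hwn_app, h0] at hy
      simp at hy
    exact hsupp y this
  refine ⟨toLim f n wp, ⟨n, wp, hwp_mem, rfl⟩, toLim f n wn, ⟨n, wn, hwn_mem, rfl⟩, ?_⟩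
  rw [← map_sub, ← hw_eq, hwx]

include hsub hsup in
lemma nuE_add {z₁ z₂ : Elim f} (h₁ : z₁ ∈ posSet X f) (h₂ : z₂ ∈ posSet X f) :
    nuE X Φ f (z₁ + z₂) = nuE X Φ f z₁ ⊔ nuE X Φ f z₂ := by
  obtain ⟨k, v, w, hv, hw, hv', hw'⟩ := common_rep hsub h₁ h₂
  rw [← hv', ← hw', ← map_add, nuE_toLim hsub hsup (add_posAt X hv hw),
    nuE_toLim hsub hsup hv, nuE_toLim hsub hsup hw, nuV_add X Φ hv hw]

include hsub hsup in
lemma nuE_nsmul {z : Elim f} (h : z ∈ posSet X f) {n : ℕ} (hn : 1 ≤ n) :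
    nuE X Φ f (n • z) = nuE X Φ f z := by
  obtain ⟨m, w, hw, rfl⟩ := h
  have hc : ((n : ℚ)) ≠ 0 := by positivity
  have h1 : (n : ℕ) • toLim f m w = toLim f m ((n : ℚ) • w) := by
    rw [map_smul, Nat.cast_smul_eq_nsmul]
  have h2 : (n : ℚ) • w ∈ PosAt X m := smul_posAt X (by positivity) hw
  rw [h1, nuE_toLim hsub hsup h2, nuE_toLim hsub hsup hw, nuV, nuV,
    Finsupp.support_smul_eq hc]

variable (hmono : ∀ n A B, A ⊆ X n → B ⊆ X n → A.sup (Φ n) ≤ B.sup (Φ n) →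
    A.biUnion (f n) ⊆ B.biUnion (f n))

include hsub hsup hmono in
lemma posSet_le {x y : Elim f} (hx : x ∈ posSet X f) (hy : y ∈ posSet X f)
    (hle : nuE X Φ f x ≤ nuE X Φ f y) :
    ∃ n : ℕ, 1 ≤ n ∧ n • y - x ∈ posSet X f := by
  obtain ⟨k, v, w, hv, hw, hvx, hwy⟩ := common_rep hsub hx hy
  have hnu : nuV Φ k v ≤ nuV Φ k w := by
    rw [← nuE_toLim hsub hsup hv, ← nuE_toLim hsub hsup hw, hvx, hwy]
    exact hle
  have hincl := hmono k v.support w.support (fun y hy => hv.2 y hy)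
    (fun y hy => hw.2 y hy) hnu
  have hv' : Tmap f k v ∈ PosAt X (k + 1) := Tmap_posAt hsub hv
  have hw' : Tmap f k w ∈ PosAt X (k + 1) := Tmap_posAt hsub hw
  have hsupp : (Tmap f k v).support ⊆ (Tmap f k w).support := by
    rw [Tmap_support_eq hv.1, Tmap_support_eq hw.1]
    exact hincl
  obtain ⟨n, hn1, hdom⟩ := exists_nat_dom hv'.1 hw'.1 hsupp
  have hnonneg : ∀ y, 0 ≤ ((n : ℚ) • Tmap f k w - Tmap f k v) y := by
    intro y
    rw [Finsupp.sub_apply, Finsupp.smul_apply, smul_eq_mul]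
    have := hdom y
    linarith
  refine ⟨n, hn1, k + 1, (n : ℚ) • Tmap f k w - Tmap f k v, ⟨hnonneg, ?_⟩, ?_⟩
  · intro y hy
    rcases Finset.mem_union.mp (Finsupp.support_sub (by exact hy)) with h | h
    · exact hw'.2 y (Finsupp.support_smul h)
    · exact hv'.2 y h
  · have e1 : toLim f (k + 1) (Tmap f k w) = y := by
      rw [← chainAux_one k w, toLim_chain f (Nat.le_succ k), hwy]
    have e2 : toLim f (k + 1) (Tmap f k v) = x := by
      rw [← chainAux_one k v, toLim_chain f (Nat.le_succ k), hvx]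
    rw [map_sub, map_smul, e1, e2, Nat.cast_smul_eq_nsmul]

end Limit

end Stmt15Aux

/-- A representation of a join-semilattice `S` as the maximal semilattice quotient of
the positive cone of a dimension vector space over `ℚ`: a `ℚ`-vector space `E`, a
strict generating cone `pos ⊆ E` (closed under addition and nonnegative rational
scalars) satisfying the refinement property (so that `E` with positive cone `pos` is
a dimension group), and a map `ν : pos → S` which is surjective, turns addition into
join, and satisfies `ν x ≤ ν y ↔ x ∝ y` (i.e. `x ≤ n • y` for some `n ≥ 1`). -/
structure ConeRep (S : Type*) [SemilatticeSup S] where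
  E : Type
  [addCommGroup : AddCommGroup E]
  [module : Module ℚ E]
  pos : Set E
  nu : E → S
  zero_mem : (0 : E) ∈ pos
  add_mem : ∀ x ∈ pos, ∀ y ∈ pos, x + y ∈ pos
  smul_mem : ∀ q : ℚ, 0 ≤ q → ∀ x ∈ pos, q • x ∈ pos
  pos_antisymm : ∀ x : E, x ∈ pos → -x ∈ pos → x = 0
  generating : ∀ x : E, ∃ y ∈ pos, ∃ z ∈ pos, x = y - z
  refinement : ∀ f₀ ∈ pos, ∀ f₁ ∈ pos, ∀ g₀ ∈ pos, ∀ g₁ ∈ pos, f₀ + f₁ = g₀ + g₁ →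
    ∃ h₀₀ ∈ pos, ∃ h₀₁ ∈ pos, ∃ h₁₀ ∈ pos, ∃ h₁₁ ∈ pos,
      f₀ = h₀₀ + h₀₁ ∧ f₁ = h₁₀ + h₁₁ ∧ g₀ = h₀₀ + h₁₀ ∧ g₁ = h₀₁ + h₁₁
  surj : ∀ s : S, ∃ x ∈ pos, nu x = s
  map_add : ∀ x ∈ pos, ∀ y ∈ pos, nu (x + y) = nu x ⊔ nu y
  le_iff : ∀ x ∈ pos, ∀ y ∈ pos,
    (nu x ≤ nu y ↔ ∃ n : ℕ, 1 ≤ n ∧ n • y - x ∈ pos)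

attribute [instance] ConeRep.addCommGroup ConeRep.module

open Stmt15Aux in
/-- Every countable distributive `0`-semilattice `S` is isomorphic to the maximal
semilattice quotient of the positive cone of a countable dimension vector space `E`;
moreover, if `S` has a greatest element then `E⁺` contains an order-unit of `E`. -/
theorem stmt15 (S : Type*) [SemilatticeSup S] [OrderBot S] [Countable S]
    (hdist : ∀ a b₀ b₁ : S, a ≤ b₀ ⊔ b₁ →
      ∃ a₀ a₁ : S, a = a₀ ⊔ a₁ ∧ a₀ ≤ b₀ ∧ a₁ ≤ b₁) :
    ∃ R : ConeRep S, Countable R.E ∧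
      ((∃ t : S, ∀ s : S, s ≤ t) →
        ∃ u ∈ R.pos, ∀ x : R.E, ∃ n : ℕ, 1 ≤ n ∧ n • u - x ∈ R.pos) := by
  classical
  obtain ⟨e, he⟩ := exists_surjective_nat S
  obtain ⟨X, Φ, f, hsub, hsup, hmono, hreal⟩ := tower_ex hdist e
  -- a positive generator with a prescribed value
  have hgen : ∀ m : ℕ, ∃ u ∈ posSet X f, nuE X Φ f u = e m := by
    intro m
    obtain ⟨x₀, hx₀, hval⟩ := hreal m
    have hmem : (Finsupp.single x₀ (1 : ℚ)) ∈ PosAt X (m + 1) := by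
      constructor
      · intro y
        rw [Finsupp.single_apply]
        split <;> norm_num
      · intro y hy
        rw [Finsupp.support_single_ne_zero x₀ one_ne_zero] at hy
        rw [Finset.mem_singleton.mp hy]
        exact hx₀
    refine ⟨toLim f (m + 1) (Finsupp.single x₀ 1), ⟨m + 1, _, hmem, rfl⟩, ?_⟩
    rw [nuE_toLim hsub hsup hmem, nuV, Finsupp.support_single_ne_zero x₀ one_ne_zero,
      Finset.sup_singleton, hval]
  refine ⟨{
    E := Elim f
    pos := posSet X f
    nu := nuE X Φ f
    zero_mem := ⟨0, 0, zero_posAt X 0, map_zero _⟩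
    add_mem := fun x hx y hy => posSet_add hsub hx hy
    smul_mem := fun q hq x hx => by
      obtain ⟨n, v, hv, rfl⟩ := hx
      exact ⟨n, q • v, smul_posAt X hq hv, by rw [map_smul]⟩
    pos_antisymm := by
      intro x hx hnx
      obtain ⟨k, v, w, hv, hw, hvx, hwx⟩ := common_rep hsub hx hnx
      have h0 : toLim f k (v + w) = 0 := by rw [map_add, hvx, hwx]; abel
      obtain ⟨k', hk', hz⟩ := toLim_zero f h0
      rw [map_add] at hz
      have hv' := chain_posAt hsub hk' hv
      have hw' := chain_posAt hsub hk' hw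
      have hz0 : chainAux f k k' v = 0 := eq_zero_of_add_eq_zero hv'.1 hw'.1 hz
      rw [← hvx, ← toLim_chain f hk' v, hz0, map_zero]
    generating := posSet_generating hsub
    refinement := by
      intro f₀ hf₀ f₁ hf₁ g₀ hg₀ g₁ hg₁ heq
      obtain ⟨k₁, a₀, a₁, ha₀, ha₁, ea₀, ea₁⟩ := common_rep hsub hf₀ hf₁
      obtain ⟨k₂, b₀, b₁, hb₀, hb₁, eb₀, eb₁⟩ := common_rep hsub hg₀ hg₁
      have h1 : k₁ ≤ max k₁ k₂ := le_max_left k₁ k₂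
      have h2 : k₂ ≤ max k₁ k₂ := le_max_right k₁ k₂
      have hAB : toLim f (max k₁ k₂) (chainAux f k₁ (max k₁ k₂) (a₀ + a₁)) =
          toLim f (max k₁ k₂) (chainAux f k₂ (max k₁ k₂) (b₀ + b₁)) := by
        rw [toLim_chain f h1, toLim_chain f h2, map_add, map_add, ea₀, ea₁, eb₀, eb₁, heq]
      obtain ⟨m, hm, hzeq⟩ := exact_eq hAB
      set A₀ : V := chainAux f k₁ m a₀ with hA₀def
      set A₁ : V := chainAux f k₁ m a₁ with hA₁def
      set B₀ : V := chainAux f k₂ m b₀ with hB₀def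
      set B₁ : V := chainAux f k₂ m b₁ with hB₁def
      have hk₁m : k₁ ≤ m := h1.trans hm
      have hk₂m : k₂ ≤ m := h2.trans hm
      have hA₀ : A₀ ∈ PosAt X m := chain_posAt hsub hk₁m ha₀
      have hA₁ : A₁ ∈ PosAt X m := chain_posAt hsub hk₁m ha₁
      have hB₀ : B₀ ∈ PosAt X m := chain_posAt hsub hk₂m hb₀
      have hB₁ : B₁ ∈ PosAt X m := chain_posAt hsub hk₂m hb₁
      have heqm : A₀ + A₁ = B₀ + B₁ := by
        have := hzeq
        rw [chainAux_comp f k₁ (max k₁ k₂) m h1 hm, chainAux_comp f k₂ (max k₁ k₂) m h2 hm]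
          at this
        rw [hA₀def, hA₁def, hB₀def, hB₁def, ← map_add, ← map_add, this]
      obtain ⟨c₀₀, c₀₁, c₁₀, c₁₁, hn₀₀, hn₀₁, hn₁₀, hn₁₁, hvan, e₀, e₁, e₂, e₃⟩ :=
        refine_V A₀ A₁ B₀ B₁ hA₀.1 hA₁.1 hB₀.1 hB₁.1 heqm
      have hvanX : ∀ y, y ∉ X m → A₀ y = 0 ∧ A₁ y = 0 ∧ B₀ y = 0 ∧ B₁ y = 0 := by
        intro y hy
        refine ⟨?_, ?_, ?_, ?_⟩ <;>
          exact Finsupp.notMem_support_iff.mp (fun hs => hy (by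
            first
              | exact hA₀.2 y hs
              | exact hA₁.2 y hs
              | exact hB₀.2 y hs
              | exact hB₁.2 y hs))
      have hmemc : ∀ c : V, (∀ y, 0 ≤ c y) →
          (∀ y, A₀ y = 0 → A₁ y = 0 → B₀ y = 0 → B₁ y = 0 → c y = 0) →
          c ∈ PosAt X m := by
        intro c hc hv
        refine ⟨hc, fun y hy => ?_⟩
        by_contra hyX
        obtain ⟨q0, q1, q2, q3⟩ := hvanX y hyX
        exact Finsupp.mem_support_iff.mp hy (hv y q0 q1 q2 q3)
      have hm₀₀ : c₀₀ ∈ PosAt X m := hmemc c₀₀ hn₀₀ fun y q0 q1 q2 q3 => (hvan y q0 q1 q2 q3).1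
      have hm₀₁ : c₀₁ ∈ PosAt X m := hmemc c₀₁ hn₀₁ fun y q0 q1 q2 q3 => (hvan y q0 q1 q2 q3).2.1
      have hm₁₀ : c₁₀ ∈ PosAt X m := hmemc c₁₀ hn₁₀ fun y q0 q1 q2 q3 => (hvan y q0 q1 q2 q3).2.2.1
      have hm₁₁ : c₁₁ ∈ PosAt X m := hmemc c₁₁ hn₁₁ fun y q0 q1 q2 q3 => (hvan y q0 q1 q2 q3).2.2.2
      refine ⟨toLim f m c₀₀, ⟨m, c₀₀, hm₀₀, rfl⟩, toLim f m c₀₁, ⟨m, c₀₁, hm₀₁, rfl⟩,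
        toLim f m c₁₀, ⟨m, c₁₀, hm₁₀, rfl⟩, toLim f m c₁₁, ⟨m, c₁₁, hm₁₁, rfl⟩,
        ?_, ?_, ?_, ?_⟩
      · rw [← map_add, ← e₀, hA₀def, toLim_chain f hk₁m, ea₀]
      · rw [← map_add, ← e₁, hA₁def, toLim_chain f hk₁m, ea₁]
      · rw [← map_add, ← e₂, hB₀def, toLim_chain f hk₂m, eb₀]
      · rw [← map_add, ← e₃, hB₁def, toLim_chain f hk₂m, eb₁]
    surj := by
      intro s
      obtain ⟨m, rfl⟩ := he s
      obtain ⟨u, hu, hval⟩ := hgen m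
      exact ⟨u, hu, hval⟩
    map_add := fun x hx y hy => nuE_add hsub hsup hx hy
    le_iff := by
      intro x hx y hy
      constructor
      · exact posSet_le hsub hsup hmono hx hy
      · rintro ⟨n, hn1, hp⟩
        have hxp : x + (n • y - x) = n • y := by abel
        calc nuE X Φ f x ≤ nuE X Φ f x ⊔ nuE X Φ f (n • y - x) := le_sup_left
          _ = nuE X Φ f (x + (n • y - x)) := (nuE_add hsub hsup hx hp).symm
          _ = nuE X Φ f (n • y) := by rw [hxp]
          _ = nuE X Φ f y := nuE_nsmul hsub hsup hy hn1
  }, ?_, ?_⟩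
  · exact inferInstanceAs (Countable (Elim f))
  · rintro ⟨t, htop⟩
    obtain ⟨mt, hmt⟩ := he t
    obtain ⟨u, hu, hval⟩ := hgen mt
    refine ⟨u, hu, fun x => ?_⟩
    obtain ⟨p, hp, q, hq, rfl⟩ := posSet_generating hsub x
    have hle : nuE X Φ f p ≤ nuE X Φ f u := by
      rw [hval, hmt]
      exact htop _
    obtain ⟨n, hn1, hnp⟩ := posSet_le hsub hsup hmono hp hu hle
    refine ⟨n, hn1, ?_⟩
    have : n • u - (p - q) = (n • u - p) + q := by abel
    rw [this]
    exact posSet_add hsub hnp hq
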